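/- Let x0 ∈ [-1,1] and y0 > 0, and set c = ((x0+1)/2, y0/2). Suppose there exists a continuous function v : ℝ × [0,y0] → ℝ which is differentiable on (ℝ × (0,y0)) \ {c} with ‖∇v(p)‖ < 1 at every such point, and which satisfies v(0,0) = 0 and v(c) = 1. Then (x0+1)² + y0² > 4 (equivalently, the distance from c to the origin (0,0) is strictly greater than 1). -/

import Mathlib

noncomputable section

open Filter

/-- The Euclidean plane. -/
abbrev E2 := EuclideanSpace ℝ (Fin 2)

/-- The point `(x, y)` of the Euclidean plane. -/
def pt (x y : ℝ) : E2 := WithLp.toLp 2 ![x, y]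

/-- Partial derivative of `f` at `p` in the `i`-th coordinate direction. -/
def pd (i : Fin 2) (f : E2 → ℝ) (p : E2) : ℝ :=
  fderiv ℝ f p (EuclideanSpace.single i 1)

/-- `v` is a solution of the maximal surface equation on the open set `U`:
`v` is `C²` on `U`, `‖∇v‖ < 1` on `U`, and the expanded form of
`div (∇v / √(1 - ‖∇v‖²)) = 0` holds on `U`. -/
def IsMaxSurfaceSol (U : Set E2) (v : E2 → ℝ) : Prop :=
  ContDiffOn ℝ 2 v U ∧
  (∀ p ∈ U, ‖gradient v p‖ < 1) ∧
  (∀ p ∈ U,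
    (1 - (pd 1 v p) ^ 2) * pd 0 (pd 0 v) p
      + 2 * pd 0 v p * pd 1 v p * pd 1 (pd 0 v) p
      + (1 - (pd 0 v p) ^ 2) * pd 1 (pd 1 v) p = 0)

/-- The open strip `ℝ × (0, y0)`. -/
def strip (y0 : ℝ) : Set E2 := {p | 0 < p 1 ∧ p 1 < y0}

/-- The closed strip `ℝ × [0, y0]`. -/
def stripCl (y0 : ℝ) : Set E2 := {p | 0 ≤ p 1 ∧ p 1 ≤ y0}

/-- The distance from a real number `t` to the set `2ℤ` of even integers. -/
def dist2Z (t : ℝ) : ℝ := Metric.infDist t {x : ℝ | ∃ n : ℤ, x = 2 * n}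

/-- The puncture point `c = ((x0+1)/2, y0/2)`. -/
def ptC (x0 y0 : ℝ) : E2 := pt ((x0 + 1) / 2) (y0 / 2)

/-- The punctured Dirichlet problem `D*(x0, y0)`: `v` is continuous on the closed
strip `ℝ × [0, y0]`, solves the maximal surface equation on the punctured open strip
`(ℝ × (0, y0)) \ {c}`, has boundary values `v(x,0) = dist(x, 2ℤ)`,
`v(x,y0) = dist(x - x0 + 1, 2ℤ)`, and `v(c) = 1`. -/
def DirichletStar (x0 y0 : ℝ) (v : E2 → ℝ) : Prop :=
  ContinuousOn v (stripCl y0) ∧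
  IsMaxSurfaceSol (strip y0 \ {ptC x0 y0}) v ∧
  (∀ x : ℝ, v (pt x 0) = dist2Z x) ∧
  (∀ x : ℝ, v (pt x y0) = dist2Z (x - x0 + 1)) ∧
  v (ptC x0 y0) = 1

/-- Necessity of the condition `(x0+1)² + y0² > 4` for the punctured Dirichlet problem:
if a continuous function on the closed strip is differentiable with gradient of norm
less than `1` away from the puncture `c`, vanishes at the origin and equals `1` at `c`,
then `c` is at distance greater than `1` from the origin. -/
theorem necessity_far_condition (x0 y0 : ℝ) (hx0 : x0 ∈ Set.Icc (-1 : ℝ) 1)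
    (hy0 : 0 < y0) (v : E2 → ℝ)
    (hcont : ContinuousOn v (stripCl y0))
    (hdiff : ∀ p ∈ strip y0 \ {ptC x0 y0},
      DifferentiableAt ℝ v p ∧ ‖gradient v p‖ < 1)
    (h0 : v (pt 0 0) = 0) (hc : v (ptC x0 y0) = 1) :
    (x0 + 1) ^ 2 + y0 ^ 2 > 4 := by
  set c : E2 := ptC x0 y0 with hcdef
  have hc1 : c 1 = y0 / 2 := by simp [hcdef, ptC, pt]
  have hc0 : c 0 = (x0 + 1) / 2 := by simp [hcdef, ptC, pt]
  have hsmul : ∀ (t : ℝ) (i : Fin 2), (t • c) i = t * c i := fun t i => rfl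
  have hzero : pt 0 0 = (0 : E2) := by
    ext i; fin_cases i <;> simp [pt]
  set f : ℝ → ℝ := fun t => v (t • c) with hf
  have hmaps : ∀ t ∈ Set.Icc (0:ℝ) 1, t • c ∈ stripCl y0 := by
    intro t ht
    constructor
    · rw [hsmul, hc1]; nlinarith [ht.1]
    · rw [hsmul, hc1]; nlinarith [ht.1, ht.2]
  have hmem : ∀ t ∈ Set.Ioo (0:ℝ) 1, t • c ∈ strip y0 \ {c} := by
    intro t ht
    refine ⟨⟨?_, ?_⟩, ?_⟩
    · rw [hsmul, hc1]; nlinarith [ht.1]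
    · rw [hsmul, hc1]; nlinarith [ht.1, ht.2]
    · intro h
      have := congrArg (fun p : E2 => p 1) (show t • c = c from h)
      simp only at this
      rw [hsmul, hc1] at this
      have : t = 1 := by
        field_simp at this; nlinarith [ht.2]
      linarith [ht.2]
  have hcontf : ContinuousOn f (Set.Icc 0 1) := by
    apply hcont.comp (Continuous.continuousOn (by continuity)) hmaps
  have hderiv : ∀ t ∈ Set.Ioo (0:ℝ) 1, HasDerivAt f (fderiv ℝ v (t • c) c) t := by
    intro t ht
    have hv := (hdiff _ (hmem t ht)).1
    have hγ : HasDerivAt (fun s : ℝ => s • c) c t := by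
      simpa using (hasDerivAt_id t).smul_const c
    exact hv.hasFDerivAt.comp_hasDerivAt t hγ
  obtain ⟨ξ, hξ, heq⟩ := exists_hasDerivAt_eq_slope f _ (by norm_num : (0:ℝ) < 1) hcontf hderiv
  have hf1 : f 1 = 1 := by simp [hf, hc]
  have hf0 : f 0 = 0 := by rw [hf]; simp only [zero_smul]; rw [← hzero]; exact h0
  have hslope : fderiv ℝ v (ξ • c) c = 1 := by
    rw [heq, hf1, hf0]; norm_num
  have hg : fderiv ℝ v (ξ • c) c = inner ℝ (gradient v (ξ • c)) c := by
    rw [gradient]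
    exact (InnerProductSpace.toDual_symm_apply).symm
  have hglt := (hdiff _ (hmem ξ hξ)).2
  have hcnormpos : 0 < ‖c‖ := by
    have : c ≠ 0 := by
      intro h; have := congrArg (fun p : E2 => p 1) h; simp only at this; rw [hc1] at this
      simp at this; linarith
    exact norm_pos_iff.mpr this
  have hbound : (1:ℝ) < ‖c‖ := by
    have h1 : |inner ℝ (gradient v (ξ • c)) c| ≤ ‖gradient v (ξ • c)‖ * ‖c‖ :=
      abs_real_inner_le_norm _ _
    have h2 : ‖gradient v (ξ • c)‖ * ‖c‖ < 1 * ‖c‖ := by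
      apply mul_lt_mul_of_pos_right hglt hcnormpos
    calc (1:ℝ) = fderiv ℝ v (ξ • c) c := hslope.symm
    _ ≤ |inner ℝ (gradient v (ξ • c)) c| := by rw [hg]; exact le_abs_self _
    _ < ‖c‖ := by linarith
  have hsq : ‖c‖ ^ 2 = ((x0+1)/2)^2 + (y0/2)^2 := by
    rw [EuclideanSpace.norm_eq, Real.sq_sqrt (by positivity)]
    simp [Fin.sum_univ_two, hc0, hc1, sq_abs]
  nlinarith [hbound, hsq, hcnormpos]
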